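/- arXiv:1801.04531 — 2 statements merged into one kernel-verified Lean document; each statement's English description precedes it below -/
import Mathlib

section
/- Let E be a Banach space and f : D → E a function on the dyadic points of [0,1]^d. For i ∈ ℕ set K_i := max_{(x,y)∈Δ_i} ‖f(x) − f(y)‖. Then for every m ∈ ℕ and all x, y ∈ D with |x − y| ≤ 2^{−m}, the chaining inequality ‖f(x) − f(y)‖ ≤ 2d · Σ_{i=m}^∞ K_i holds (the sum being taken in [0,∞]). -/
open ENNReal

/-- The dyadic points of level `m` in `[0,1]^d`: each coordinate is `i·2^{-m}` for some
integer `0 ≤ i ≤ 2^m`. -/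
def dyadicLevel (d m : ℕ) : Set (EuclideanSpace ℝ (Fin d)) :=
  {x | ∀ j, ∃ i : ℕ, i ≤ 2 ^ m ∧ x j = (i : ℝ) * (2 : ℝ) ^ (-(m : ℤ))}

/-- The dyadic points of `[0,1]^d`. -/
def dyadicPts (d : ℕ) : Set (EuclideanSpace ℝ (Fin d)) := ⋃ m, dyadicLevel d m

/-- `Δ_m`: pairs of dyadic points of level `m` at euclidean distance exactly `2^{-m}`. -/
def dyadicPairs (d m : ℕ) :
    Set (EuclideanSpace ℝ (Fin d) × EuclideanSpace ℝ (Fin d)) :=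
  {p | p.1 ∈ dyadicLevel d m ∧ p.2 ∈ dyadicLevel d m ∧ ‖p.1 - p.2‖ = (2 : ℝ) ^ (-(m : ℤ))}

section ChainingAux

variable {d : ℕ} {E : Type*} [NormedAddCommGroup E]

private lemma edist_eq_coe_nnnorm_sub {F : Type*} [SeminormedAddCommGroup F] (a b : F) :
    edist a b = (‖a - b‖₊ : ℝ≥0∞) := by
  rw [edist_nndist, nndist_eq_nnnorm]

private lemma two_zpow_pos' (n : ℤ) : (0:ℝ) < 2 ^ n := zpow_pos (by norm_num) n

private lemma level_subset_succ {n : ℕ} : dyadicLevel d n ⊆ dyadicLevel d (n+1) := by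
  intro x hx j
  obtain ⟨i, hi, hxi⟩ := hx j
  refine ⟨2*i, by rw [pow_succ]; omega, ?_⟩
  rw [hxi]
  have h2 : ((2:ℝ)) ^ (-((n:ℕ)+1:ℕ) : ℤ) = 2 ^ (-(n:ℤ)) / 2 := by
    rw [show (-((n:ℕ)+1:ℕ) : ℤ) = -(n:ℤ) - 1 by push_cast; ring,
      zpow_sub₀ (by norm_num : (2:ℝ) ≠ 0), zpow_one]
  rw [h2]; push_cast; ring

private lemma level_subset {n N : ℕ} (h : n ≤ N) : dyadicLevel d n ⊆ dyadicLevel d N := by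
  induction N with
  | zero =>
    have : n = 0 := by omega
    subst this; exact subset_rfl
  | succ N ih =>
    rcases Nat.lt_or_ge n (N+1) with h' | h'
    · exact (ih (by omega)).trans level_subset_succ
    · have : n = N+1 := by omega
      subst this; exact subset_rfl

private lemma coord_mem {n : ℕ} {x : EuclideanSpace ℝ (Fin d)} (hx : x ∈ dyadicLevel d n)
    (j : Fin d) : 0 ≤ x j ∧ x j ≤ 1 := by
  obtain ⟨i, hi, hxi⟩ := hx j
  refine ⟨by rw [hxi]; positivity, ?_⟩
  rw [hxi]
  have h1 : (i:ℝ) ≤ 2^n := by exact_mod_cast hi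
  have h2 : (2:ℝ)^(n:ℕ) * 2^(-(n:ℤ)) = 1 := by
    rw [← zpow_natCast (2:ℝ) n, ← zpow_add₀ (by norm_num : (2:ℝ) ≠ 0)]
    simp
  calc (i:ℝ) * 2^(-(n:ℤ)) ≤ 2^(n:ℕ) * 2^(-(n:ℤ)) :=
        mul_le_mul_of_nonneg_right h1 (two_zpow_pos' _).le
    _ = 1 := h2

private lemma norm_single {a b : EuclideanSpace ℝ (Fin d)} (j0 : Fin d)
    (h : ∀ j, j ≠ j0 → a j = b j) : ‖a - b‖ = |a j0 - b j0| := by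
  rw [EuclideanSpace.norm_eq]
  rw [Finset.sum_eq_single j0 (fun j _ hj => by
      simp [PiLp.sub_apply, h j hj]) (by simp)]
  simp [PiLp.sub_apply, Real.sqrt_sq_eq_abs]

private lemma coord_le_norm (v : EuclideanSpace ℝ (Fin d)) (j : Fin d) : |v j| ≤ ‖v‖ := by
  rw [EuclideanSpace.norm_eq]
  have h1 : ‖v j‖^2 ≤ ∑ i, ‖v i‖^2 :=
    Finset.single_le_sum (f := fun i => ‖v i‖^2) (fun i _ => by positivity) (Finset.mem_univ j)
  calc |v j| = √(‖v j‖^2) := by rw [Real.sqrt_sq_eq_abs, Real.norm_eq_abs, abs_abs]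
    _ ≤ _ := Real.sqrt_le_sqrt h1

private lemma pair_bound (f : EuclideanSpace ℝ (Fin d) → E) (K : ℕ → ℝ≥0∞)
    (hK : ∀ i, K i = ⨆ p ∈ dyadicPairs d i, (‖f p.1 - f p.2‖₊ : ℝ≥0∞))
    {n : ℕ} {a b : EuclideanSpace ℝ (Fin d)}
    (ha : a ∈ dyadicLevel d n) (hb : b ∈ dyadicLevel d n) (j0 : Fin d)
    (heq : ∀ j, j ≠ j0 → a j = b j) (hle : |a j0 - b j0| ≤ (2:ℝ)^(-(n:ℤ))) :
    (‖f a - f b‖₊ : ℝ≥0∞) ≤ K n := by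
  by_cases hab : a j0 = b j0
  · have hA : a = b := by
      ext j
      by_cases hj : j = j0
      · subst hj; exact hab
      · exact heq j hj
    simp [hA]
  · have hnorm : ‖a - b‖ = (2:ℝ)^(-(n:ℤ)) := by
      rw [norm_single j0 heq]
      obtain ⟨i, _, hi⟩ := ha j0
      obtain ⟨i', _, hi'⟩ := hb j0
      rw [hi, hi'] at hab hle ⊢
      rw [← sub_mul, abs_mul, abs_of_pos (two_zpow_pos' _)] at hle ⊢
      have hne : i ≠ i' := by
        rintro rfl
        exact hab rfl
      have h1 : |(i:ℝ) - i'| ≤ 1 := by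
        have hpos := two_zpow_pos' (-(n:ℤ))
        nlinarith [abs_nonneg ((i:ℝ) - i')]
      have h1' : |(i:ℤ) - (i':ℤ)| ≤ 1 := by
        have hc : |(((i:ℤ) - (i':ℤ) : ℤ) : ℝ)| ≤ 1 := by push_cast; exact h1
        exact_mod_cast hc
      have hne' : (i:ℤ) - (i':ℤ) ≠ 0 := by
        simp only [sub_ne_zero]
        exact_mod_cast hne
      have h2 : |(i:ℤ) - (i':ℤ)| = 1 := by
        rcases abs_cases ((i:ℤ) - (i':ℤ)) with ⟨he, _⟩ | ⟨he, _⟩ <;> omega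
      have h3 : |(i:ℝ) - (i':ℝ)| = 1 := by
        have hc := congrArg (fun t : ℤ => (t : ℝ)) h2
        push_cast at hc
        exact hc
      rw [h3, one_mul]
    have hmem : (a, b) ∈ dyadicPairs d n := ⟨ha, hb, hnorm⟩
    rw [hK n]
    exact le_iSup₂_of_le (a, b) hmem le_rfl

private lemma grid_bound (f : EuclideanSpace ℝ (Fin d) → E) (K : ℕ → ℝ≥0∞)
    (hK : ∀ i, K i = ⨆ p ∈ dyadicPairs d i, (‖f p.1 - f p.2‖₊ : ℝ≥0∞))
    {n : ℕ} {a b : EuclideanSpace ℝ (Fin d)}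
    (ha : a ∈ dyadicLevel d n) (hb : b ∈ dyadicLevel d n)
    (h : ∀ j, |a j - b j| ≤ (2:ℝ) ^ (-(n:ℤ))) :
    (‖f a - f b‖₊ : ℝ≥0∞) ≤ d * K n := by
  classical
  set z : ℕ → EuclideanSpace ℝ (Fin d) :=
    fun k => WithLp.toLp 2 (fun j : Fin d => if (j:ℕ) < k then a j else b j) with hzdef
  have hz : ∀ k, z k ∈ dyadicLevel d n := by
    intro k j
    simp only [hzdef, PiLp.toLp_apply]
    split
    · exact ha j
    · exact hb j
  have hstep : ∀ k, (‖f (z (k+1)) - f (z k)‖₊ : ℝ≥0∞) ≤ K n := by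
    intro k
    by_cases hk : k < d
    · refine pair_bound f K hK (hz _) (hz _) ⟨k, hk⟩ ?_ ?_
      · intro j hj
        have hjk : (j:ℕ) ≠ k := fun h' => hj (Fin.ext h')
        simp only [hzdef]
        rcases Nat.lt_or_ge (j:ℕ) k with h' | h'
        · simp [h', Nat.lt_succ_of_lt h']
        · have h2 : ¬ (j:ℕ) < k := by omega
          have h3 : ¬ (j:ℕ) < k + 1 := by omega
          simp [h2, h3]
      · simp only [hzdef]
        simp only [Fin.val_mk, Nat.lt_succ_self, Nat.lt_irrefl, if_true, if_false]
        exact h _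
    · have hzz : z (k+1) = z k := by
        ext j
        have hj : (j:ℕ) < k := lt_of_lt_of_le j.2 (not_lt.1 hk)
        simp only [hzdef]
        simp [hj, Nat.lt_succ_of_lt hj]
      simp [hzz]
  have htel : ∀ k : ℕ, (‖f (z k) - f (z 0)‖₊ : ℝ≥0∞) ≤ k * K n := by
    intro k
    induction k with
    | zero => simp
    | succ k ih =>
      have tri : (‖f (z (k+1)) - f (z 0)‖₊ : ℝ≥0∞) ≤
          (‖f (z (k+1)) - f (z k)‖₊ : ℝ≥0∞) + ‖f (z k) - f (z 0)‖₊ := by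
        rw [← edist_eq_coe_nnnorm_sub, ← edist_eq_coe_nnnorm_sub, ← edist_eq_coe_nnnorm_sub]
        exact edist_triangle _ _ _
      calc (‖f (z (k+1)) - f (z 0)‖₊ : ℝ≥0∞)
          ≤ (‖f (z (k+1)) - f (z k)‖₊ : ℝ≥0∞) + ‖f (z k) - f (z 0)‖₊ := tri
        _ ≤ K n + k * K n := add_le_add (hstep k) ih
        _ = (↑(k+1) : ℝ≥0∞) * K n := by push_cast; ring
  have hA : a = z d := by
    ext j
    simp only [hzdef]
    simp [j.2]
  have hB : b = z 0 := by
    ext j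
    simp only [hzdef]
    simp
  calc (‖f a - f b‖₊ : ℝ≥0∞) = ‖f (z d) - f (z 0)‖₊ := by rw [← hA, ← hB]
    _ ≤ d * K n := htel d

/-- Coordinatewise rounding down to the grid of level `n`. -/
private noncomputable def approx (d n : ℕ) (x : EuclideanSpace ℝ (Fin d)) :
    EuclideanSpace ℝ (Fin d) :=
  WithLp.toLp 2 (fun j => (⌊(2:ℝ)^n * x j⌋ : ℝ) * (2:ℝ)^(-(n:ℤ)))

private lemma approx_apply (n : ℕ) (x : EuclideanSpace ℝ (Fin d)) (j : Fin d) :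
    approx d n x j = (⌊(2:ℝ)^n * x j⌋ : ℝ) * (2:ℝ)^(-(n:ℤ)) := rfl

private lemma floor_nonneg_of (n : ℕ) {t : ℝ} (h0 : 0 ≤ t) : 0 ≤ ⌊(2:ℝ)^n * t⌋ :=
  Int.floor_nonneg.2 (by positivity)

private lemma approx_mem (n : ℕ) {x : EuclideanSpace ℝ (Fin d)}
    (hc : ∀ j, 0 ≤ x j ∧ x j ≤ 1) : approx d n x ∈ dyadicLevel d n := by
  intro j
  obtain ⟨h0, h1⟩ := hc j
  have hfn : 0 ≤ ⌊(2:ℝ)^n * x j⌋ := floor_nonneg_of n h0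
  refine ⟨(⌊(2:ℝ)^n * x j⌋).toNat, ?_, ?_⟩
  · have hle : (2:ℝ)^n * x j ≤ ((2^n : ℕ) : ℝ) := by
      push_cast
      nlinarith [pow_pos (by norm_num : (0:ℝ) < 2) n]
    have h2 : ⌊(2:ℝ)^n * x j⌋ ≤ ((2^n : ℕ) : ℤ) := by
      have h3 := Int.floor_le_floor hle
      rwa [Int.floor_natCast] at h3
    omega
  · have hcast : ((⌊(2:ℝ)^n * x j⌋.toNat : ℕ) : ℝ) = (⌊(2:ℝ)^n * x j⌋ : ℝ) := by
      exact_mod_cast congrArg (fun z : ℤ => (z : ℝ)) (Int.toNat_of_nonneg hfn)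
    rw [approx_apply, hcast]

private lemma approx_self {N : ℕ} {x : EuclideanSpace ℝ (Fin d)} (hx : x ∈ dyadicLevel d N) :
    approx d N x = x := by
  ext j
  obtain ⟨i, _, hxi⟩ := hx j
  rw [approx_apply, hxi]
  have h2 : (2:ℝ)^(N:ℕ) * ((i:ℝ) * 2^(-(N:ℤ))) = i := by
    rw [← zpow_natCast (2:ℝ) N]
    rw [show (2:ℝ)^(N:ℤ) * ((i:ℝ) * 2^(-(N:ℤ))) = (i:ℝ) * (2^(N:ℤ) * 2^(-(N:ℤ))) by ring,
      ← zpow_add₀ (by norm_num : (2:ℝ) ≠ 0)]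
    simp
  rw [h2, Int.floor_natCast]
  norm_cast

private lemma approx_step (n : ℕ) {x : EuclideanSpace ℝ (Fin d)} (j : Fin d) :
    |approx d (n+1) x j - approx d n x j| ≤ (2:ℝ)^(-((n+1:ℕ)):ℤ) := by
  set t := x j with ht
  set F := ⌊(2:ℝ)^n * t⌋ with hF
  set G := ⌊(2:ℝ)^(n+1) * t⌋ with hG
  have hFle : (F:ℝ) ≤ (2:ℝ)^n * t := Int.floor_le _
  have hFlt : (2:ℝ)^n * t < F + 1 := Int.lt_floor_add_one _
  have hpow : (2:ℝ)^(n+1) = 2 * 2^n := by ring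
  have h2F : 2*F ≤ G := by
    rw [hG]
    apply Int.le_floor.2
    push_cast
    calc ((2:ℝ)*F) ≤ 2 * ((2:ℝ)^n * t) := by linarith
      _ = (2:ℝ)^(n+1) * t := by ring
  have hG2F : G ≤ 2*F + 1 := by
    have hGle : (G:ℝ) ≤ (2:ℝ)^(n+1) * t := Int.floor_le _
    have hx2 : (2:ℝ)^(n+1) * t = 2 * ((2:ℝ)^n * t) := by ring
    have hlt : (G:ℝ) < 2*F + 2 := by rw [hx2] at hGle; linarith
    have h' : G < 2*F + 2 := by exact_mod_cast hlt
    omega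
  have hval : approx d (n+1) x j - approx d n x j = ((G - 2*F : ℤ) : ℝ) * (2:ℝ)^(-((n+1:ℕ)):ℤ) := by
    rw [approx_apply, approx_apply, ← ht, ← hF, ← hG]
    have hsplit : (2:ℝ)^(-(n:ℤ)) = 2 * (2:ℝ)^(-((n+1:ℕ)):ℤ) := by
      rw [show (-((n+1:ℕ)):ℤ) = -(n:ℤ) - 1 by push_cast; ring,
        zpow_sub₀ (by norm_num : (2:ℝ) ≠ 0), zpow_one]
      ring
    rw [hsplit]
    push_cast
    ring
  rw [hval, abs_mul, abs_of_pos (by positivity : (0:ℝ) < (2:ℝ)^(-((n+1:ℕ)):ℤ))]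
  have habs : |((G - 2*F : ℤ) : ℝ)| ≤ 1 := by
    have : |G - 2*F| ≤ 1 := by
      rcases abs_cases (G - 2*F) with ⟨he, _⟩ | ⟨he, _⟩ <;> omega
    calc |((G - 2*F : ℤ) : ℝ)| = ((|G - 2*F| : ℤ) : ℝ) := by rw [Int.cast_abs]
      _ ≤ 1 := by exact_mod_cast this
  nlinarith [zpow_pos (by norm_num : (0:ℝ) < 2) (-((n+1:ℕ)):ℤ)]

private lemma floor_close {s t : ℝ} (h : |s - t| ≤ 1) : |⌊s⌋ - ⌊t⌋| ≤ 1 := by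
  rw [abs_le] at h ⊢
  constructor
  · have hst : t ≤ s + 1 := by linarith
    have h2 : ⌊t⌋ ≤ ⌊s + 1⌋ := Int.floor_le_floor hst
    rw [show s + (1:ℝ) = s + (1:ℤ) by push_cast; ring, Int.floor_add_intCast] at h2
    omega
  · have hst : s ≤ t + 1 := by linarith
    have h2 : ⌊s⌋ ≤ ⌊t + 1⌋ := Int.floor_le_floor hst
    rw [show t + (1:ℝ) = t + (1:ℤ) by push_cast; ring, Int.floor_add_intCast] at h2
    omega

private lemma approx_chain (f : EuclideanSpace ℝ (Fin d) → E) (K : ℕ → ℝ≥0∞)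
    (hK : ∀ i, K i = ⨆ p ∈ dyadicPairs d i, (‖f p.1 - f p.2‖₊ : ℝ≥0∞))
    {x : EuclideanSpace ℝ (Fin d)} (hc : ∀ j, 0 ≤ x j ∧ x j ≤ 1)
    {m N : ℕ} (hm : m ≤ N) :
    (‖f (approx d N x) - f (approx d m x)‖₊ : ℝ≥0∞) ≤
      ∑ n ∈ Finset.Ico m N, (d : ℝ≥0∞) * K (n+1) := by
  induction N, hm using Nat.le_induction with
  | base => simp
  | succ N hm ih =>
    have tri : (‖f (approx d (N+1) x) - f (approx d m x)‖₊ : ℝ≥0∞) ≤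
        (‖f (approx d (N+1) x) - f (approx d N x)‖₊ : ℝ≥0∞) +
          ‖f (approx d N x) - f (approx d m x)‖₊ := by
      rw [← edist_eq_coe_nnnorm_sub, ← edist_eq_coe_nnnorm_sub, ← edist_eq_coe_nnnorm_sub]
      exact edist_triangle _ _ _
    have hstep : (‖f (approx d (N+1) x) - f (approx d N x)‖₊ : ℝ≥0∞) ≤ d * K (N+1) :=
      grid_bound f K hK (approx_mem (N+1) hc) (level_subset_succ (approx_mem N hc))
        (fun j => approx_step N j)
    rw [Finset.sum_Ico_succ_top hm]
    calc (‖f (approx d (N+1) x) - f (approx d m x)‖₊ : ℝ≥0∞)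
        ≤ (‖f (approx d (N+1) x) - f (approx d N x)‖₊ : ℝ≥0∞) +
            ‖f (approx d N x) - f (approx d m x)‖₊ := tri
      _ ≤ (d : ℝ≥0∞) * K (N+1) + ∑ n ∈ Finset.Ico m N, (d : ℝ≥0∞) * K (n+1) :=
          add_le_add hstep ih
      _ = (∑ n ∈ Finset.Ico m N, (d : ℝ≥0∞) * K (n+1)) + (d : ℝ≥0∞) * K (N+1) := by
          rw [add_comm]

end ChainingAux

/-- Chaining inequality: for a function `f` on the dyadic points of `[0,1]^d` with
`K_i = max_{(x,y) ∈ Δ_i} ‖f(x) - f(y)‖`, any two dyadic points `x, y` with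
`|x - y| ≤ 2^{-m}` satisfy `‖f(x) - f(y)‖ ≤ 2d · Σ_{i=m}^∞ K_i` (the sum in `[0,∞]`). -/
theorem stmt2 {E : Type*} [NormedAddCommGroup E] {d : ℕ}
    (f : EuclideanSpace ℝ (Fin d) → E)
    (K : ℕ → ℝ≥0∞)
    (hK : ∀ i, K i = ⨆ p ∈ dyadicPairs d i, (‖f p.1 - f p.2‖₊ : ℝ≥0∞))
    (m : ℕ) {x y : EuclideanSpace ℝ (Fin d)}
    (hx : x ∈ dyadicPts d) (hy : y ∈ dyadicPts d)
    (hxy : ‖x - y‖ ≤ (2 : ℝ) ^ (-(m : ℤ))) :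
    (‖f x - f y‖₊ : ℝ≥0∞) ≤ 2 * (d : ℝ≥0∞) * ∑' i : ℕ, K (m + i) := by
  obtain ⟨N1, hx1⟩ := Set.mem_iUnion.1 hx
  obtain ⟨N2, hy1⟩ := Set.mem_iUnion.1 hy
  set N := max (max N1 N2) m with hN
  have hxN : x ∈ dyadicLevel d N := level_subset (le_max_of_le_left (le_max_left _ _)) hx1
  have hyN : y ∈ dyadicLevel d N := level_subset (le_max_of_le_left (le_max_right _ _)) hy1
  have hmN : m ≤ N := le_max_right _ _
  have hcx : ∀ j, 0 ≤ x j ∧ x j ≤ 1 := coord_mem hxN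
  have hcy : ∀ j, 0 ≤ y j ∧ y j ≤ 1 := coord_mem hyN
  have hA : (‖f x - f (approx d m x)‖₊ : ℝ≥0∞) ≤
      ∑ n ∈ Finset.Ico m N, (d : ℝ≥0∞) * K (n+1) := by
    have h := approx_chain f K hK hcx hmN
    rwa [approx_self hxN] at h
  have hB : (‖f y - f (approx d m y)‖₊ : ℝ≥0∞) ≤
      ∑ n ∈ Finset.Ico m N, (d : ℝ≥0∞) * K (n+1) := by
    have h := approx_chain f K hK hcy hmN
    rwa [approx_self hyN] at h
  have hC : (‖f (approx d m x) - f (approx d m y)‖₊ : ℝ≥0∞) ≤ d * K m := by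
    apply grid_bound f K hK (approx_mem m hcx) (approx_mem m hcy)
    intro j
    have hxyj : |x j - y j| ≤ (2:ℝ)^(-(m:ℤ)) := by
      have h1 := coord_le_norm (x - y) j
      rw [PiLp.sub_apply] at h1
      exact h1.trans hxy
    have h2m : (2:ℝ)^(m:ℕ) * (2:ℝ)^(-(m:ℤ)) = 1 := by
      rw [← zpow_natCast (2:ℝ) m, ← zpow_add₀ (by norm_num : (2:ℝ) ≠ 0)]
      simp
    have h1 : |(2:ℝ)^(m:ℕ) * x j - (2:ℝ)^(m:ℕ) * y j| ≤ 1 := by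
      rw [← mul_sub, abs_mul, abs_of_pos (by positivity : (0:ℝ) < (2:ℝ)^(m:ℕ))]
      calc (2:ℝ)^(m:ℕ) * |x j - y j| ≤ (2:ℝ)^(m:ℕ) * (2:ℝ)^(-(m:ℤ)) :=
            mul_le_mul_of_nonneg_left hxyj (by positivity)
        _ = 1 := h2m
    have h2 := floor_close h1
    rw [approx_apply, approx_apply, ← sub_mul, abs_mul, abs_of_pos (two_zpow_pos' _)]
    have h3 : |(⌊(2:ℝ)^(m:ℕ) * x j⌋ : ℝ) - (⌊(2:ℝ)^(m:ℕ) * y j⌋ : ℝ)| ≤ 1 := by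
      have hc : |((⌊(2:ℝ)^(m:ℕ) * x j⌋ - ⌊(2:ℝ)^(m:ℕ) * y j⌋ : ℤ) : ℝ)| ≤ 1 := by
        rw [← Int.cast_abs]
        exact_mod_cast h2
      push_cast at hc
      exact hc
    nlinarith [two_zpow_pos' (-(m:ℤ))]
  have tri : (‖f x - f y‖₊ : ℝ≥0∞) ≤
      (‖f x - f (approx d m x)‖₊ : ℝ≥0∞) + ‖f (approx d m x) - f (approx d m y)‖₊ +
        ‖f (approx d m y) - f y‖₊ := by
    rw [← edist_eq_coe_nnnorm_sub, ← edist_eq_coe_nnnorm_sub, ← edist_eq_coe_nnnorm_sub,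
      ← edist_eq_coe_nnnorm_sub]
    exact edist_triangle4 _ _ _ _
  have hB' : (‖f (approx d m y) - f y‖₊ : ℝ≥0∞) ≤
      ∑ n ∈ Finset.Ico m N, (d : ℝ≥0∞) * K (n+1) := by
    rw [← nnnorm_neg, neg_sub]
    exact hB
  set T := ∑' i : ℕ, K (m + (i+1)) with hT
  have hsum : ∑' i : ℕ, K (m + i) = K m + T := by
    rw [tsum_eq_zero_add' ENNReal.summable]
    simp only [Nat.add_zero]
    rfl
  have hfin : (∑ n ∈ Finset.Ico m N, (d : ℝ≥0∞) * K (n+1)) ≤ (d : ℝ≥0∞) * T := by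
    rw [← Finset.mul_sum]
    have hre : ∑ n ∈ Finset.Ico m N, K (n+1) =
        ∑ i ∈ Finset.range (N - m), K (m + (i+1)) := by
      rw [Finset.sum_Ico_eq_sum_range]
      rfl
    rw [hre]
    exact mul_le_mul_right (ENNReal.sum_le_tsum _) _
  calc (‖f x - f y‖₊ : ℝ≥0∞)
      ≤ (‖f x - f (approx d m x)‖₊ : ℝ≥0∞) + ‖f (approx d m x) - f (approx d m y)‖₊ +
          ‖f (approx d m y) - f y‖₊ := tri
    _ ≤ (d : ℝ≥0∞) * T + (d : ℝ≥0∞) * K m + (d : ℝ≥0∞) * T :=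
        add_le_add (add_le_add (hA.trans hfin) hC) (hB'.trans hfin)
    _ ≤ 2 * (d : ℝ≥0∞) * (K m + T) := by
        have e1 : (d:ℝ≥0∞) * T + (d:ℝ≥0∞) * K m + (d:ℝ≥0∞) * T =
            (d:ℝ≥0∞) * K m + 2 * ((d:ℝ≥0∞) * T) := by ring
        have e2 : 2 * (d:ℝ≥0∞) * (K m + T) = 2 * ((d:ℝ≥0∞) * K m) + 2 * ((d:ℝ≥0∞) * T) := by
          ring
        rw [e1, e2]
        exact add_le_add (le_mul_of_one_le_left zero_le one_le_two) le_rfl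
    _ = 2 * (d : ℝ≥0∞) * ∑' i : ℕ, K (m + i) := by rw [hsum]
end

section
/- Let E be a Banach space, f : D → E a function on the dyadic points of [0,1]^d, and 0 ≤ α ≤ 1. For i ∈ ℕ set K_i := max_{(x,y)∈Δ_i} ‖f(x) − f(y)‖, and let M_α := sup{ ‖f(x) − f(y)‖ / |x − y|^α : x, y ∈ D, x ≠ y }. Then M_α ≤ 2^{1+α} d · Σ_{i=0}^∞ 2^{iα} K_i (both sides taken in [0,∞]). -/
open ENNReal

namespace Stmt3Aux

lemma coord_le {d : ℕ} (u : EuclideanSpace ℝ (Fin d)) (j : Fin d) : |u j| ≤ ‖u‖ := by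
  rw [EuclideanSpace.norm_eq]
  have h1 : |u j| = Real.sqrt (‖u j‖ ^ 2) := by
    rw [Real.sqrt_sq_eq_abs, Real.norm_eq_abs, abs_abs]
  rw [h1]
  apply Real.sqrt_le_sqrt
  exact Finset.single_le_sum (f := fun k => ‖u k‖ ^ 2) (fun k _ => by positivity) (Finset.mem_univ j)

lemma norm_single {d : ℕ} (u : EuclideanSpace ℝ (Fin d)) (j : Fin d)
    (h : ∀ k, k ≠ j → u k = 0) : ‖u‖ = |u j| := by
  rw [EuclideanSpace.norm_eq]
  rw [Finset.sum_eq_single j (fun k _ hk => by rw [h k hk]; simp) (by simp)]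
  rw [Real.norm_eq_abs, sq_abs, Real.sqrt_sq_eq_abs]

/-- the grid point with integer coordinates `a` at level `n` -/
noncomputable def pt (d n : ℕ) (a : Fin d → ℕ) : EuclideanSpace ℝ (Fin d) :=
  WithLp.toLp 2 (fun j => (a j : ℝ) * (2 : ℝ) ^ (-(n : ℤ)))

@[simp] lemma pt_apply {d : ℕ} (n : ℕ) (a : Fin d → ℕ) (j : Fin d) :
    pt d n a j = (a j : ℝ) * (2 : ℝ) ^ (-(n : ℤ)) := rfl

lemma pt_mem {d n : ℕ} {a : Fin d → ℕ} (h : ∀ j, a j ≤ 2 ^ n) :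
    pt d n a ∈ dyadicLevel d n := fun j => ⟨a j, h j, rfl⟩


lemma norm_pt_sub_update {d n : ℕ} (b : Fin d → ℕ) (j : Fin d) (c : ℕ)
    (hc : Nat.dist c (b j) = 1) :
    ‖pt d n (Function.update b j c) - pt d n b‖ = (2 : ℝ) ^ (-(n : ℤ)) := by
  rw [norm_single _ j]
  · have : (Function.update b j c j : ℝ) = c := by simp
    simp only [PiLp.sub_apply, pt_apply, Function.update_self]
    rw [← sub_mul, abs_mul, abs_of_pos (a := (2:ℝ) ^ (-(n:ℤ))) (by positivity)]
    have : |(c : ℝ) - (b j : ℝ)| = 1 := by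
      have := hc
      simp only [Nat.dist] at this
      rcases le_or_gt c (b j) with h | h
      · have : b j = c + 1 := by omega
        rw [this]; push_cast; rw [abs_sub_comm]; simp
      · have : c = b j + 1 := by omega
        rw [this]; push_cast; simp
    rw [this, one_mul]
  · intro k hk
    simp only [PiLp.sub_apply, pt_apply, Function.update_of_ne hk, sub_self]

lemma path_bound {E : Type*} [NormedAddCommGroup E] {d : ℕ}
    (f : EuclideanSpace ℝ (Fin d) → E) (K : ℕ → ℝ≥0∞)
    (hstep : ∀ n p, p ∈ dyadicPairs d n → (‖f p.1 - f p.2‖₊ : ℝ≥0∞) ≤ K n)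
    (n : ℕ) :
    ∀ S (a b : Fin d → ℕ), (∀ j, a j ≤ 2 ^ n) → (∀ j, b j ≤ 2 ^ n) →
      (∑ j, Nat.dist (a j) (b j)) = S →
      (‖f (pt d n a) - f (pt d n b)‖₊ : ℝ≥0∞) ≤ S * K n := by
  intro S
  induction S with
  | zero =>
    intro a b _ _ hS
    have : a = b := by
      funext j
      have h0 : Nat.dist (a j) (b j) = 0 :=
        Finset.sum_eq_zero_iff.mp hS j (Finset.mem_univ j)
      simp only [Nat.dist] at h0
      omega
    simp [this]
  | succ S ih =>
    intro a b ha hb hS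
    have hne : ∃ j, a j ≠ b j := by
      by_contra h
      push_neg at h
      have : ∀ j, Nat.dist (a j) (b j) = 0 := fun j => by simp [h j, Nat.dist]
      simp [Finset.sum_congr rfl (fun j _ => this j)] at hS
    obtain ⟨j, hj⟩ := hne
    set c : ℕ := if a j < b j then b j - 1 else b j + 1 with hcdef
    have hdist1 : Nat.dist c (b j) = 1 := by
      simp only [Nat.dist, hcdef]
      split <;> omega
    have hdrop : Nat.dist (a j) c = Nat.dist (a j) (b j) - 1 := by
      simp only [Nat.dist, hcdef]; split <;> omega
    set b' := Function.update b j c with hb'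
    have hb'le : ∀ k, b' k ≤ 2 ^ n := by
      intro k
      rcases eq_or_ne k j with rfl | hk
      · have hbk : b' k = c := by simp [hb']
        rw [hbk, hcdef]
        have h1 := hb k; have h2 := ha k
        split <;> omega
      · rw [hb', Function.update_of_ne hk]; exact hb k
    have hsum' : (∑ k, Nat.dist (a k) (b' k)) = S := by
      have h1 : ∑ k, Nat.dist (a k) (b' k)
          = Nat.dist (a j) c + ∑ k ∈ Finset.univ.erase j, Nat.dist (a k) (b k) := by
        rw [← Finset.add_sum_erase _ _ (Finset.mem_univ j)]
        congr 1
        · simp [hb']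
        · apply Finset.sum_congr rfl
          intro k hk
          rw [hb', Function.update_of_ne (Finset.ne_of_mem_erase hk)]
      have h2 : Nat.dist (a j) (b j) + ∑ k ∈ Finset.univ.erase j, Nat.dist (a k) (b k) = S + 1 :=
        (Finset.add_sum_erase _ (fun k => Nat.dist (a k) (b k)) (Finset.mem_univ j)).trans hS
      have hpos : 1 ≤ Nat.dist (a j) (b j) := by
        simp only [Nat.dist]; omega
      omega
    have step : (‖f (pt d n b') - f (pt d n b)‖₊ : ℝ≥0∞) ≤ K n := by
      apply hstep n (pt d n b', pt d n b)
      exact ⟨pt_mem hb'le, pt_mem hb, norm_pt_sub_update b j c hdist1⟩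
    calc (‖f (pt d n a) - f (pt d n b)‖₊ : ℝ≥0∞)
        ≤ (‖f (pt d n a) - f (pt d n b')‖₊ : ℝ≥0∞) + ‖f (pt d n b') - f (pt d n b)‖₊ := by
          rw [← ENNReal.coe_add]
          have heq : f (pt d n a) - f (pt d n b)
              = (f (pt d n a) - f (pt d n b')) + (f (pt d n b') - f (pt d n b)) := by abel
          rw [heq]
          exact_mod_cast nnnorm_add_le _ _
      _ ≤ S * K n + K n := add_le_add (ih a b' ha hb'le hsum') step
      _ = (S + 1 : ℕ) * K n := by push_cast; ring

lemma dist_cast_real (a b : ℕ) : ((Nat.dist a b : ℝ)) = |(a:ℝ) - b| := by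
  rcases le_total a b with h | h
  · have hd : Nat.dist a b = b - a := by simp only [Nat.dist]; omega
    rw [hd, abs_sub_comm, abs_of_nonneg (sub_nonneg.mpr (Nat.cast_le.mpr h))]
    push_cast [h]; ring
  · have hd : Nat.dist a b = a - b := by simp only [Nat.dist]; omega
    rw [hd, abs_of_nonneg (sub_nonneg.mpr (Nat.cast_le.mpr h))]
    push_cast [h]; ring

lemma div_dist_le {P a b : ℕ} (hP : 0 < P) (h : Nat.dist a b < 2 * P) :
    Nat.dist (a / P) (b / P) ≤ 2 := by
  have key : ∀ u v : ℕ, u ≤ v → v < u + 2 * P → v / P ≤ u / P + 2 := by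
    intro u v huv hlt
    have h3 : v / P < u / P + 3 := by
      rw [Nat.div_lt_iff_lt_mul hP]
      have hmod := Nat.div_add_mod u P
      have hmodlt : u % P < P := Nat.mod_lt _ hP
      have hrw : (u / P + 3) * P = P * (u / P) + 3 * P := by ring
      omega
    omega
  rcases le_total a b with hab | hab
  · have h1 : b < a + 2 * P := by simp only [Nat.dist] at h; omega
    have h2 := key a b hab h1
    have h3 := Nat.div_le_div_right (c := P) hab
    simp only [Nat.dist]; omega
  · have h1 : a < b + 2 * P := by simp only [Nat.dist] at h; omega
    have h2 := key b a hab h1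
    have h3 := Nat.div_le_div_right (c := P) hab
    simp only [Nat.dist]; omega

lemma two_zpow_succ (t : ℕ) : (2 : ℝ) ^ (-(t : ℤ)) = 2 * (2 : ℝ) ^ (-((t + 1 : ℕ) : ℤ)) := by
  have h : (-(t:ℤ)) = 1 + (-((t + 1 : ℕ) : ℤ)) := by push_cast; ring
  rw [h, zpow_add₀ (by norm_num : (2:ℝ) ≠ 0)]
  norm_num

lemma pt_double {d t : ℕ} (a : Fin d → ℕ) :
    pt d t a = pt d (t + 1) (fun j => 2 * a j) := by
  apply PiLp.ext; intro j
  simp only [pt_apply]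
  rw [two_zpow_succ t]
  push_cast
  ring

lemma dyadicLevel_mono {d m m' : ℕ} (h : m ≤ m') : dyadicLevel d m ⊆ dyadicLevel d m' := by
  intro x hx j
  obtain ⟨i, hi, hxj⟩ := hx j
  refine ⟨i * 2 ^ (m' - m), ?_, ?_⟩
  · calc i * 2 ^ (m' - m) ≤ 2 ^ m * 2 ^ (m' - m) := Nat.mul_le_mul_right _ hi
      _ = 2 ^ m' := by rw [← pow_add]; congr 1; omega
  · rw [hxj]
    push_cast
    rw [mul_assoc]
    congr 1
    rw [← zpow_natCast (2:ℝ) (m' - m), ← zpow_add₀ (by norm_num : (2:ℝ) ≠ 0)]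
    congr 1
    push_cast [h]
    ring

lemma step_bound {E : Type*} [NormedAddCommGroup E] {d : ℕ}
    (f : EuclideanSpace ℝ (Fin d) → E) (K : ℕ → ℝ≥0∞)
    (hstep : ∀ n p, p ∈ dyadicPairs d n → (‖f p.1 - f p.2‖₊ : ℝ≥0∞) ≤ K n)
    {m : ℕ} (i : Fin d → ℕ) (hi : ∀ j, i j ≤ 2 ^ m) {t : ℕ} (ht : t < m) :
    (‖f (pt d (t+1) (fun j => i j / 2 ^ (m - (t+1)))) -
        f (pt d t (fun j => i j / 2 ^ (m - t)))‖₊ : ℝ≥0∞) ≤ d * K (t + 1) := by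
  rw [pt_double (t := t) (fun j => i j / 2 ^ (m - t))]
  have hb1 : ∀ j, i j / 2 ^ (m - (t+1)) ≤ 2 ^ (t+1) := by
    intro j
    calc i j / 2 ^ (m - (t+1)) ≤ 2 ^ m / 2 ^ (m - (t+1)) := Nat.div_le_div_right (hi j)
      _ = 2 ^ (m - (m - (t+1))) := Nat.pow_div (by omega) (by norm_num)
      _ = 2 ^ (t+1) := by congr 1; omega
  have hb2 : ∀ j, 2 * (i j / 2 ^ (m - t)) ≤ 2 ^ (t+1) := by
    intro j
    have : i j / 2 ^ (m - t) ≤ 2 ^ t := by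
      calc i j / 2 ^ (m - t) ≤ 2 ^ m / 2 ^ (m - t) := Nat.div_le_div_right (hi j)
        _ = 2 ^ (m - (m - t)) := Nat.pow_div (by omega) (by norm_num)
        _ = 2 ^ t := by congr 1; omega
    omega
  have hdist : ∀ j, Nat.dist (i j / 2 ^ (m - (t+1))) (2 * (i j / 2 ^ (m - t))) ≤ 1 := by
    intro j
    have hdd : i j / 2 ^ (m - t) = (i j / 2 ^ (m - (t+1))) / 2 := by
      rw [Nat.div_div_eq_div_mul]
      congr 1
      rw [show m - t = (m - (t+1)) + 1 by omega, pow_succ]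
    rw [hdd]
    have := Nat.div_add_mod (i j / 2 ^ (m - (t+1))) 2
    have := Nat.mod_lt (i j / 2 ^ (m - (t+1))) (show 0 < 2 by norm_num)
    simp only [Nat.dist]
    omega
  have key := path_bound f K hstep (t+1)
    (∑ j, Nat.dist (i j / 2 ^ (m - (t+1))) (2 * (i j / 2 ^ (m - t))))
    (fun j => i j / 2 ^ (m - (t+1))) (fun j => 2 * (i j / 2 ^ (m - t))) hb1 hb2 rfl
  refine key.trans (mul_le_mul_left ?_ _)
  have hsum : (∑ j, Nat.dist (i j / 2 ^ (m - (t+1))) (2 * (i j / 2 ^ (m - t)))) ≤ d := by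
    calc (∑ j, Nat.dist (i j / 2 ^ (m - (t+1))) (2 * (i j / 2 ^ (m - t))))
        ≤ ∑ _j : Fin d, 1 := Finset.sum_le_sum (fun j _ => hdist j)
      _ = d := by simp
  exact_mod_cast Nat.cast_le.mpr hsum

lemma telescope {E : Type*} [NormedAddCommGroup E] {d : ℕ}
    (f : EuclideanSpace ℝ (Fin d) → E) (K : ℕ → ℝ≥0∞)
    (hstep : ∀ n p, p ∈ dyadicPairs d n → (‖f p.1 - f p.2‖₊ : ℝ≥0∞) ≤ K n)
    {m : ℕ} (i : Fin d → ℕ) (hi : ∀ j, i j ≤ 2 ^ m) :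
    ∀ k, k ≤ m →
      (‖f (pt d m (fun j => i j / 2 ^ (m - m))) -
          f (pt d (m - k) (fun j => i j / 2 ^ (m - (m - k))))‖₊ : ℝ≥0∞)
        ≤ ∑ t ∈ Finset.Ico (m - k) m, (d : ℝ≥0∞) * K (t + 1) := by
  intro k
  induction k with
  | zero => intro _; simp
  | succ k ih =>
    intro hk
    have hk' : k ≤ m := by omega
    have hsuc : m - k = (m - (k+1)) + 1 := by omega
    set n' := m - (k + 1) with hn'
    have hlt : n' < m := by omega
    calc (‖f (pt d m (fun j => i j / 2 ^ (m - m))) -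
            f (pt d n' (fun j => i j / 2 ^ (m - n')))‖₊ : ℝ≥0∞)
        ≤ (‖f (pt d m (fun j => i j / 2 ^ (m - m))) -
              f (pt d (n' + 1) (fun j => i j / 2 ^ (m - (n' + 1))))‖₊ : ℝ≥0∞)
          + ‖f (pt d (n' + 1) (fun j => i j / 2 ^ (m - (n' + 1)))) -
              f (pt d n' (fun j => i j / 2 ^ (m - n')))‖₊ := by
          rw [← ENNReal.coe_add]
          have heq : f (pt d m (fun j => i j / 2 ^ (m - m))) -
              f (pt d n' (fun j => i j / 2 ^ (m - n')))
              = (f (pt d m (fun j => i j / 2 ^ (m - m))) -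
                  f (pt d (n' + 1) (fun j => i j / 2 ^ (m - (n' + 1)))))
                + (f (pt d (n' + 1) (fun j => i j / 2 ^ (m - (n' + 1)))) -
                  f (pt d n' (fun j => i j / 2 ^ (m - n')))) := by abel
          rw [heq]
          exact_mod_cast nnnorm_add_le _ _
      _ ≤ (∑ t ∈ Finset.Ico (m - k) m, (d : ℝ≥0∞) * K (t + 1)) + (d : ℝ≥0∞) * K (n' + 1) := by
          refine add_le_add ?_ (step_bound f K hstep i hi hlt)
          have : n' + 1 = m - k := by omega
          rw [this]
          exact ih hk'
      _ = ∑ t ∈ Finset.Ico n' m, (d : ℝ≥0∞) * K (t + 1) := by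
          rw [Finset.sum_eq_sum_Ico_succ_bot hlt (fun t => (d : ℝ≥0∞) * K (t + 1)),
            show n' + 1 = m - k by omega]
          ring

lemma coord_mem_unit {m : ℕ} {r : ℝ} {i : ℕ} (hi : i ≤ 2 ^ m)
    (hr : r = (i:ℝ) * (2:ℝ) ^ (-(m:ℤ))) : 0 ≤ r ∧ r ≤ 1 := by
  subst hr
  constructor
  · positivity
  · have h1 : ((i:ℝ)) ≤ (2:ℝ) ^ (m:ℕ) := by exact_mod_cast hi
    have h2 : (2:ℝ) ^ (m:ℕ) * (2:ℝ) ^ (-(m:ℤ)) = 1 := by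
      rw [← zpow_natCast (2:ℝ) m, ← zpow_add₀ (by norm_num : (2:ℝ) ≠ 0)]; simp
    have h3 : (0:ℝ) < (2:ℝ) ^ (-(m:ℤ)) := by positivity
    nlinarith

end Stmt3Aux

/-- For a function `f` on the dyadic points of `[0,1]^d`, `0 ≤ α ≤ 1`, and
`K_i = max_{(x,y) ∈ Δ_i} ‖f(x) - f(y)‖`, the Hölder seminorm
`M_α = sup { ‖f(x) - f(y)‖ / |x-y|^α : x ≠ y dyadic }` satisfies
`M_α ≤ 2^{1+α} d · Σ_{i=0}^∞ 2^{iα} K_i` (both sides in `[0,∞]`). -/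
theorem stmt3 {E : Type*} [NormedAddCommGroup E] {d : ℕ}
    (f : EuclideanSpace ℝ (Fin d) → E)
    (α : ℝ) (hα0 : 0 ≤ α) (hα1 : α ≤ 1)
    (K : ℕ → ℝ≥0∞)
    (hK : ∀ i, K i = ⨆ p ∈ dyadicPairs d i, (‖f p.1 - f p.2‖₊ : ℝ≥0∞)) :
    (⨆ x ∈ dyadicPts d, ⨆ y ∈ dyadicPts d, ⨆ _ : x ≠ y,
        (‖f x - f y‖₊ : ℝ≥0∞) / ENNReal.ofReal (‖x - y‖ ^ α))
      ≤ ENNReal.ofReal ((2 : ℝ) ^ ((1 : ℝ) + α) * d) *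
          ∑' i : ℕ, ENNReal.ofReal ((2 : ℝ) ^ ((i : ℝ) * α)) * K i := by
  classical
  set u : ℕ → ℝ≥0∞ := fun t => ENNReal.ofReal ((2:ℝ) ^ ((t:ℝ) * α)) * K t with hu
  set T : ℝ≥0∞ := ∑' i : ℕ, u i with hT
  have hstep : ∀ n p, p ∈ dyadicPairs d n → (‖f p.1 - f p.2‖₊ : ℝ≥0∞) ≤ K n := by
    intro n p hp
    rw [hK n]
    exact le_iSup₂ (f := fun p (_ : p ∈ dyadicPairs d n) => (‖f p.1 - f p.2‖₊ : ℝ≥0∞)) p hp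
  refine iSup₂_le fun x hx => iSup₂_le fun y hy => iSup_le fun hxy => ?_
  obtain ⟨mx, hmx⟩ := Set.mem_iUnion.mp hx
  obtain ⟨my, hmy⟩ := Set.mem_iUnion.mp hy
  set m := max mx my with hm
  have hxm : x ∈ dyadicLevel d m := Stmt3Aux.dyadicLevel_mono (le_max_left _ _) hmx
  have hym : y ∈ dyadicLevel d m := Stmt3Aux.dyadicLevel_mono (le_max_right _ _) hmy
  choose ix hix hx' using hxm
  choose iy hiy hy' using hym
  -- a coordinate where x and y differ
  have hexj : ∃ j, x j ≠ y j := by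
    by_contra h
    push_neg at h
    exact hxy (PiLp.ext h)
  obtain ⟨j₀, hj₀⟩ := hexj
  have hij₀ : ix j₀ ≠ iy j₀ := by
    intro h
    apply hj₀
    rw [hx' j₀, hy' j₀, h]
  -- coordinates minus
  have hsub : ∀ j : Fin d, (x - y) j = x j - y j := fun j => rfl
  have hcoord : ∀ j, x j - y j = ((ix j : ℝ) - iy j) * (2:ℝ) ^ (-(m:ℤ)) := by
    intro j
    rw [hx' j, hy' j]
    ring
  -- lower bound for the norm
  have hnorm_lb : (2:ℝ) ^ (-(m:ℤ)) ≤ ‖x - y‖ := by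
    have h1 : (1:ℝ) ≤ |(ix j₀ : ℝ) - iy j₀| := by
      rw [← Stmt3Aux.dist_cast_real]
      have : 1 ≤ Nat.dist (ix j₀) (iy j₀) := by
        simp only [Nat.dist]
        omega
      exact_mod_cast this
    have h2 : (2:ℝ) ^ (-(m:ℤ)) ≤ |x j₀ - y j₀| := by
      rw [hcoord j₀, abs_mul, abs_of_pos (show (0:ℝ) < (2:ℝ) ^ (-(m:ℤ)) by positivity)]
      nlinarith [show (0:ℝ) < (2:ℝ) ^ (-(m:ℤ)) by positivity]
    calc (2:ℝ) ^ (-(m:ℤ)) ≤ |x j₀ - y j₀| := h2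
      _ = |(x - y) j₀| := by rw [hsub]
      _ ≤ ‖x - y‖ := Stmt3Aux.coord_le _ _
  have hxy_pos : (0:ℝ) < ‖x - y‖ :=
    lt_of_lt_of_le (by positivity) hnorm_lb
  -- minimal level n with 2^{-n} ≤ ‖x - y‖
  have hex : ∃ k : ℕ, (2:ℝ) ^ (-(k:ℤ)) ≤ ‖x - y‖ := ⟨m, hnorm_lb⟩
  set n : ℕ := Nat.find hex with hn_def
  have hn : (2:ℝ) ^ (-(n:ℤ)) ≤ ‖x - y‖ := Nat.find_spec hex
  have hnm : n ≤ m := Nat.find_min' hex hnorm_lb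
  -- per-coordinate closeness
  have hclose : ∀ j, |x j - y j| < 2 * (2:ℝ) ^ (-(n:ℤ)) := by
    intro j
    rcases Nat.eq_zero_or_pos n with hn0 | hn0
    · -- n = 0 : coordinates lie in [0,1]
      obtain ⟨ha, hb⟩ := Stmt3Aux.coord_mem_unit (hix j) (hx' j)
      obtain ⟨hc, hd⟩ := Stmt3Aux.coord_mem_unit (hiy j) (hy' j)
      have : |x j - y j| ≤ 1 := by
        rw [abs_le]
        constructor <;> linarith
      have : (2:ℝ) ^ (-(n:ℤ)) = 1 := by rw [hn0]; norm_num
      linarith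
    · -- n ≥ 1 : by minimality ‖x-y‖ < 2^{-(n-1)}
      have hmin : ¬ ((2:ℝ) ^ (-((n-1:ℕ):ℤ)) ≤ ‖x - y‖) :=
        Nat.find_min hex (by omega)
      push_neg at hmin
      have h2 : (2:ℝ) ^ (-((n-1:ℕ):ℤ)) = 2 * (2:ℝ) ^ (-(n:ℤ)) := by
        have h := Stmt3Aux.two_zpow_succ (n-1)
        rw [show n - 1 + 1 = n from Nat.succ_pred_eq_of_pos hn0] at h
        exact h
      calc |x j - y j| = |(x - y) j| := by rw [hsub]
        _ ≤ ‖x - y‖ := Stmt3Aux.coord_le _ _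
        _ < 2 * (2:ℝ) ^ (-(n:ℤ)) := by rw [← h2]; exact hmin
  -- integer distance bound at level n
  have hPpos : 0 < 2 ^ (m - n) := Nat.pow_pos (by norm_num)
  have hdistn : ∀ j, Nat.dist (ix j / 2 ^ (m - n)) (iy j / 2 ^ (m - n)) ≤ 2 := by
    intro j
    apply Stmt3Aux.div_dist_le hPpos
    -- Nat.dist (ix j) (iy j) < 2 * 2^(m-n)
    have hreal : |(ix j : ℝ) - iy j| < 2 * (2:ℝ) ^ ((m - n : ℕ) : ℕ) := by
      have hpow : (2:ℝ) ^ (-(n:ℤ)) = (2:ℝ) ^ ((m - n : ℕ) : ℕ) * (2:ℝ) ^ (-(m:ℤ)) := by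
        rw [← zpow_natCast (2:ℝ) (m - n : ℕ), ← zpow_add₀ (by norm_num : (2:ℝ) ≠ 0)]
        congr 1
        push_cast [hnm]
        ring
      have h1 := hclose j
      rw [hcoord j, abs_mul, abs_of_pos (show (0:ℝ) < (2:ℝ) ^ (-(m:ℤ)) by positivity),
        hpow] at h1
      have h2m : (0:ℝ) < (2:ℝ) ^ (-(m:ℤ)) := by positivity
      nlinarith
    rw [← Stmt3Aux.dist_cast_real] at hreal
    exact_mod_cast hreal
  -- the three-part chain
  set axn : Fin d → ℕ := fun j => ix j / 2 ^ (m - n) with haxn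
  set ayn : Fin d → ℕ := fun j => iy j / 2 ^ (m - n) with hayn
  have haxn_le : ∀ j, axn j ≤ 2 ^ n := by
    intro j
    calc axn j ≤ 2 ^ m / 2 ^ (m - n) := Nat.div_le_div_right (hix j)
      _ = 2 ^ (m - (m - n)) := Nat.pow_div (by omega) (by norm_num)
      _ = 2 ^ n := by congr 1; omega
  have hayn_le : ∀ j, ayn j ≤ 2 ^ n := by
    intro j
    calc ayn j ≤ 2 ^ m / 2 ^ (m - n) := Nat.div_le_div_right (hiy j)
      _ = 2 ^ (m - (m - n)) := Nat.pow_div (by omega) (by norm_num)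
      _ = 2 ^ n := by congr 1; omega
  -- middle bound
  have hmid : (‖f (Stmt3Aux.pt d n axn) - f (Stmt3Aux.pt d n ayn)‖₊ : ℝ≥0∞)
      ≤ (2 * d : ℕ) * K n := by
    have key := Stmt3Aux.path_bound f K hstep n (∑ j, Nat.dist (axn j) (ayn j))
      axn ayn haxn_le hayn_le rfl
    refine key.trans (mul_le_mul_left ?_ _)
    have : (∑ j, Nat.dist (axn j) (ayn j)) ≤ 2 * d := by
      calc (∑ j, Nat.dist (axn j) (ayn j)) ≤ ∑ _j : Fin d, 2 :=
        Finset.sum_le_sum (fun j _ => hdistn j)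
        _ = 2 * d := by simp [Finset.sum_const, mul_comm]
    exact_mod_cast this
  -- telescopes
  have hxpt : Stmt3Aux.pt d m (fun j => ix j / 2 ^ (m - m)) = x := by
    apply PiLp.ext; intro j
    simp only [Stmt3Aux.pt_apply, Nat.sub_self, pow_zero, Nat.div_one]
    exact (hx' j).symm
  have hypt : Stmt3Aux.pt d m (fun j => iy j / 2 ^ (m - m)) = y := by
    apply PiLp.ext; intro j
    simp only [Stmt3Aux.pt_apply, Nat.sub_self, pow_zero, Nat.div_one]
    exact (hy' j).symm
  have hmmn : m - (m - n) = n := by omega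
  have htelx : (‖f x - f (Stmt3Aux.pt d n axn)‖₊ : ℝ≥0∞)
      ≤ ∑ t ∈ Finset.Ico n m, (d : ℝ≥0∞) * K (t + 1) := by
    have := Stmt3Aux.telescope f K hstep ix hix (m - n) (by omega)
    rw [hmmn, hxpt] at this
    exact this
  have htely : (‖f y - f (Stmt3Aux.pt d n ayn)‖₊ : ℝ≥0∞)
      ≤ ∑ t ∈ Finset.Ico n m, (d : ℝ≥0∞) * K (t + 1) := by
    have := Stmt3Aux.telescope f K hstep iy hiy (m - n) (by omega)
    rw [hmmn, hypt] at this
    exact this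
  set S : ℝ≥0∞ := ∑ t ∈ Finset.Ico n m, (d : ℝ≥0∞) * K (t + 1) with hS
  have hA : (‖f x - f y‖₊ : ℝ≥0∞) ≤ (2 * d : ℕ) * K n + S + S := by
    calc (‖f x - f y‖₊ : ℝ≥0∞)
        ≤ (‖f x - f (Stmt3Aux.pt d n axn)‖₊ : ℝ≥0∞)
          + ‖f (Stmt3Aux.pt d n axn) - f (Stmt3Aux.pt d n ayn)‖₊
          + ‖f (Stmt3Aux.pt d n ayn) - f y‖₊ := by
          rw [← ENNReal.coe_add, ← ENNReal.coe_add]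
          have heq : f x - f y = (f x - f (Stmt3Aux.pt d n axn))
              + (f (Stmt3Aux.pt d n axn) - f (Stmt3Aux.pt d n ayn))
              + (f (Stmt3Aux.pt d n ayn) - f y) := by abel
          rw [heq]
          exact_mod_cast (nnnorm_add_le _ _).trans (add_le_add (nnnorm_add_le _ _) le_rfl)
      _ ≤ S + ((2 * d : ℕ) * K n) + S := by
          refine add_le_add (add_le_add htelx hmid) ?_
          rw [← nnnorm_neg]
          simp only [neg_sub]
          exact htely
      _ = (2 * d : ℕ) * K n + S + S := by ring
  -- pass to the Hölder quotient
  set c : ℝ≥0∞ := ENNReal.ofReal ((2:ℝ) ^ ((n:ℝ) * α)) with hc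
  have hc_pos : (0:ℝ) < (2:ℝ) ^ ((n:ℝ) * α) := Real.rpow_pos_of_pos (by norm_num) _
  have hdiv : (‖f x - f y‖₊ : ℝ≥0∞) / ENNReal.ofReal (‖x - y‖ ^ α)
      ≤ (‖f x - f y‖₊ : ℝ≥0∞) * c := by
    have hb : ENNReal.ofReal (((2:ℝ) ^ (-(n:ℤ))) ^ α) ≤ ENNReal.ofReal (‖x - y‖ ^ α) :=
      ENNReal.ofReal_le_ofReal (Real.rpow_le_rpow (by positivity) hn hα0)
    calc (‖f x - f y‖₊ : ℝ≥0∞) / ENNReal.ofReal (‖x - y‖ ^ α)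
        ≤ (‖f x - f y‖₊ : ℝ≥0∞) / ENNReal.ofReal (((2:ℝ) ^ (-(n:ℤ))) ^ α) :=
          ENNReal.div_le_div_left hb _
      _ = (‖f x - f y‖₊ : ℝ≥0∞) * c := by
          rw [div_eq_mul_inv]
          congr 1
          have h1 : ((2:ℝ) ^ (-(n:ℤ))) ^ α = ((2:ℝ) ^ ((n:ℝ) * α))⁻¹ := by
            rw [← Real.rpow_intCast (2:ℝ) (-(n:ℤ)),
              ← Real.rpow_mul (by norm_num : (0:ℝ) ≤ 2)]
            push_cast
            rw [neg_mul, Real.rpow_neg (by norm_num : (0:ℝ) ≤ 2)]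
          rw [h1, ENNReal.ofReal_inv_of_pos hc_pos, inv_inv]
  -- reindex and combine sums
  have hreidx : ∑ t ∈ Finset.Ico n m, u (t + 1) = ∑ t ∈ Finset.Ico (n+1) (m+1), u t := by
    rw [Finset.sum_Ico_eq_sum_range, Finset.sum_Ico_eq_sum_range]
    rw [show m + 1 - (n + 1) = m - n by omega]
    apply Finset.sum_congr rfl
    intro i _
    congr 1
    omega
  have hsum : ∑ t ∈ Finset.Ico n (m+1), u t = u n + ∑ t ∈ Finset.Ico n m, u (t+1) := by
    rw [Finset.sum_eq_sum_Ico_succ_bot (by omega : n < m+1) u, hreidx]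
  have h1 : K n * c ≤ u n := by
    simp only [hu]
    rw [hc, mul_comm]
  have h2 : S * c ≤ (d:ℝ≥0∞) * ∑ t ∈ Finset.Ico n m, u (t+1) := by
    rw [hS, Finset.sum_mul, Finset.mul_sum]
    apply Finset.sum_le_sum
    intro t ht
    have hn_le : n ≤ t := (Finset.mem_Ico.mp ht).1
    have hcle : c ≤ ENNReal.ofReal ((2:ℝ) ^ (((t+1:ℕ):ℝ) * α)) := by
      rw [hc]
      apply ENNReal.ofReal_le_ofReal
      apply Real.rpow_le_rpow_of_exponent_le (by norm_num : (1:ℝ) ≤ 2)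
      apply mul_le_mul_of_nonneg_right _ hα0
      push_cast
      have : (n:ℝ) ≤ (t:ℝ) := Nat.cast_le.mpr hn_le
      linarith
    calc (d:ℝ≥0∞) * K (t+1) * c = (d:ℝ≥0∞) * (K (t+1) * c) := by ring
      _ ≤ (d:ℝ≥0∞) * u (t+1) := by
          apply mul_le_mul_right
          calc K (t+1) * c ≤ K (t+1) * ENNReal.ofReal ((2:ℝ) ^ (((t+1:ℕ):ℝ) * α)) :=
            mul_le_mul_right hcle _
            _ = u (t+1) := by simp only [hu]; rw [mul_comm]
  have hcast : ((2 * d : ℕ) : ℝ≥0∞) = 2 * (d:ℝ≥0∞) := by push_cast; ring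
  have hfin : ((2 * d : ℕ) : ℝ≥0∞) * K n * c + S * c + S * c
      ≤ 2 * (d:ℝ≥0∞) * ∑ t ∈ Finset.Ico n (m+1), u t := by
    rw [hcast]
    calc 2 * (d:ℝ≥0∞) * K n * c + S * c + S * c
        = 2 * ((d:ℝ≥0∞) * (K n * c)) + 2 * (S * c) := by ring
      _ ≤ 2 * ((d:ℝ≥0∞) * u n) + 2 * ((d:ℝ≥0∞) * ∑ t ∈ Finset.Ico n m, u (t+1)) := by
          exact add_le_add (mul_le_mul_right (mul_le_mul_right h1 _) _) (mul_le_mul_right h2 _)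
      _ = 2 * (d:ℝ≥0∞) * (u n + ∑ t ∈ Finset.Ico n m, u (t+1)) := by ring
      _ = 2 * (d:ℝ≥0∞) * ∑ t ∈ Finset.Ico n (m+1), u t := by rw [hsum]
  have hconst : 2 * (d:ℝ≥0∞) ≤ ENNReal.ofReal ((2:ℝ) ^ ((1:ℝ) + α) * d) := by
    have h2d : (2:ℝ≥0∞) * (d:ℝ≥0∞) = ENNReal.ofReal (2 * (d:ℝ)) := by
      rw [ENNReal.ofReal_mul (by norm_num : (0:ℝ) ≤ 2)]
      congr 1
      · norm_num
      · exact (ENNReal.ofReal_natCast d).symm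
    rw [h2d]
    apply ENNReal.ofReal_le_ofReal
    have h2le : (2:ℝ) ≤ (2:ℝ) ^ ((1:ℝ) + α) := by
      nth_rewrite 1 [show (2:ℝ) = (2:ℝ) ^ (1:ℝ) by rw [Real.rpow_one]]
      exact Real.rpow_le_rpow_of_exponent_le (by norm_num) (by linarith)
    exact mul_le_mul_of_nonneg_right h2le (Nat.cast_nonneg d)
  calc (‖f x - f y‖₊ : ℝ≥0∞) / ENNReal.ofReal (‖x - y‖ ^ α)
      ≤ (‖f x - f y‖₊ : ℝ≥0∞) * c := hdiv
    _ ≤ ((2 * d : ℕ) * K n + S + S) * c := mul_le_mul_left hA c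
    _ = ((2 * d : ℕ) : ℝ≥0∞) * K n * c + S * c + S * c := by ring
    _ ≤ 2 * (d:ℝ≥0∞) * ∑ t ∈ Finset.Ico n (m+1), u t := hfin
    _ ≤ 2 * (d:ℝ≥0∞) * T := mul_le_mul_right (ENNReal.sum_le_tsum _) _
    _ ≤ ENNReal.ofReal ((2:ℝ) ^ ((1:ℝ) + α) * d) * T := mul_le_mul_left hconst T
end
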